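/- For probability distributions p, q on the same finite set with q_i > 0 whenever p_i > 0, let r = max_{i: p_i>0} p_i/q_i. If r ≤ 2, then D(p‖q) ≤ log(2)·‖p - q‖_1. -/

import Mathlib

open Finset

lemma chord_mul_log {t : ℝ} (h1 : 1 ≤ t) (h2 : t ≤ 2) :
    t * Real.log t ≤ (t - 1) * (2 * Real.log 2) := by
  have h := Real.convexOn_mul_log.2 (by norm_num : (1:ℝ) ∈ Set.Ici 0)
    (by norm_num : (2:ℝ) ∈ Set.Ici 0) (by linarith : (0:ℝ) ≤ 2 - t)
    (by linarith : (0:ℝ) ≤ t - 1) (by ring)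
  simp only [smul_eq_mul, Real.log_one, mul_one, mul_zero] at h
  have ht : 2 - t + (t - 1) * 2 = t := by ring
  rw [ht] at h
  nlinarith [h]

/-- Informational divergence D(p‖q) (real-valued, summed over the support of p). -/
noncomputable def Dr {n : ℕ} (p q : Fin n → ℝ) : ℝ :=
  ∑ i, if 0 < p i then p i * Real.log (p i / q i) else 0

theorem reverse_pinsker_r_le_two
    {n : ℕ} (p q : Fin n → ℝ)
    (hp_nonneg : ∀ i, 0 ≤ p i) (hq_nonneg : ∀ i, 0 ≤ q i)
    (hp_sum : ∑ i, p i = 1) (hq_sum : ∑ i, q i = 1)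
    (habs : ∀ i, 0 < p i → 0 < q i)
    (hr : ∀ i, 0 < p i → p i / q i ≤ 2) :
    Dr p q ≤ Real.log 2 * ∑ i, |p i - q i| := by
  have hlog2 : 0 < Real.log 2 := Real.log_pos (by norm_num)
  have key : ∀ i, (if 0 < p i then p i * Real.log (p i / q i) else 0)
      ≤ Real.log 2 * ((p i - q i) + |p i - q i|) := by
    intro i
    by_cases hp : 0 < p i
    · simp only [hp, if_pos]
      have hq : 0 < q i := habs i hp
      rcases le_or_gt (p i) (q i) with hle | hgt
      · have h1 : p i / q i ≤ 1 := (div_le_one hq).2 hle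
        have hlogle : Real.log (p i / q i) ≤ 0 :=
          Real.log_nonpos (by positivity) h1
        have : p i * Real.log (p i / q i) ≤ 0 :=
          mul_nonpos_of_nonneg_of_nonpos hp.le hlogle
        have habsv : |p i - q i| = q i - p i := by
          rw [abs_of_nonpos (by linarith)]; ring
        rw [habsv]
        nlinarith
      · set t := p i / q i with ht
        have ht1 : 1 ≤ t := (one_le_div hq).2 hgt.le
        have ht2 : t ≤ 2 := hr i hp
        have hchord := chord_mul_log ht1 ht2
        have hpt : p i = q i * t := by rw [ht]; field_simp [hq.ne']
        have habsv : |p i - q i| = p i - q i := abs_of_nonneg (by linarith)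
        rw [habsv, hpt]
        have := mul_le_mul_of_nonneg_left hchord hq.le
        calc q i * t * Real.log t ≤ q i * ((t - 1) * (2 * Real.log 2)) := by
              nlinarith
          _ = Real.log 2 * (q i * t - q i + (q i * t - q i)) := by ring
    · simp only [hp, if_neg, not_false_iff]
      have hp0 : p i = 0 := le_antisymm (not_lt.1 hp) (hp_nonneg i)
      have : 0 ≤ (p i - q i) + |p i - q i| := by
        rcases abs_cases (p i - q i) with ⟨h, _⟩ | ⟨h, _⟩ <;> nlinarith
      positivity
  have hsum : Dr p q ≤ ∑ i, Real.log 2 * ((p i - q i) + |p i - q i|) :=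
    Finset.sum_le_sum fun i _ => key i
  have hdiff : ∑ i, (p i - q i) = 0 := by
    rw [Finset.sum_sub_distrib, hp_sum, hq_sum]; ring
  calc Dr p q ≤ ∑ i, Real.log 2 * ((p i - q i) + |p i - q i|) := hsum
    _ = Real.log 2 * ∑ i, (p i - q i) + Real.log 2 * ∑ i, |p i - q i| := by
        rw [← Finset.mul_sum, Finset.sum_add_distrib, mul_add]
    _ = Real.log 2 * ∑ i, |p i - q i| := by rw [hdiff]; ring
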